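/- arXiv:1404.1826 — 3 statements merged into one kernel-verified Lean document; each statement's English description precedes it below -/
import Mathlib

section
/- Let f = h + conj(g) ∈ Ľ_H^α. Then for all z ∈ Δ, |g(z)| ≤ ((1-α)/(1+α))² · log((1 + α|z|)/(1 - |z|)) + |z|/(1 - |z|)² - ((1-α)/(1+α)) · 2|z|/(1 - |z|). -/
set_option maxHeartbeats 1600000

open Metric Set Complex Filter Topology intervalIntegral

lemma analyticAt_strictDeriv {f : ℂ → ℂ} {x : ℂ} (h : AnalyticAt ℂ f x) :
    HasStrictDerivAt f (deriv f x) x := by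
  obtain ⟨p, hp⟩ := h
  have h1 := hp.hasStrictDerivAt
  rw [h1.hasDerivAt.deriv]
  exact h1

lemma mobius_normSq (a u : ℂ) :
    normSq (1 - (starRingEnd ℂ) a * u) - normSq (u - a) = (1 - normSq a) * (1 - normSq u) := by
  simp only [normSq_apply, sub_re, sub_im, mul_re, mul_im, one_re, one_im, conj_re, conj_im]
  ring

lemma schwarz_pick {F : ℂ → ℂ} (hF : DifferentiableOn ℂ F (ball (0:ℂ) 1))
    (hb : ∀ w ∈ ball (0:ℂ) 1, ‖F w‖ < 1) {z : ℂ} (hz : z ∈ ball (0:ℂ) 1) :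
    ‖F z‖ ≤ (‖F 0‖ + ‖z‖) / (1 + ‖F 0‖ * ‖z‖) := by
  have h0 : (0:ℂ) ∈ ball (0:ℂ) 1 := by simp
  set a := F 0 with ha
  have haa : ‖a‖ < 1 := hb 0 h0
  -- denominator nonvanishing
  have hden : ∀ w ∈ ball (0:ℂ) 1, (1 - (starRingEnd ℂ) a * F w) ≠ 0 := by
    intro w hw
    have : ‖(starRingEnd ℂ) a * F w‖ < 1 := by
      rw [norm_mul, Complex.norm_conj]
      nlinarith [hb w hw, norm_nonneg (F w), norm_nonneg a, haa]
    intro hc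
    rw [sub_eq_zero] at hc
    rw [← hc] at this
    simp at this
  set φ : ℂ → ℂ := fun w => (F w - a) / (1 - (starRingEnd ℂ) a * F w) with hφ
  have hφd : DifferentiableOn ℂ φ (ball (0:ℂ) 1) := by
    apply DifferentiableOn.div
    · exact hF.sub (differentiableOn_const a)
    · exact (differentiableOn_const 1).sub ((differentiableOn_const _).mul hF)
    · exact hden
  have hφ0 : φ 0 = 0 := by simp [hφ, ha]
  have hφb : ∀ w ∈ ball (0:ℂ) 1, ‖φ w‖ < 1 := by
    intro w hw
    rw [hφ]
    simp only
    rw [norm_div, div_lt_one (by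
      have := hden w hw
      exact (norm_pos_iff.mpr this))]
    have key := mobius_normSq a (F w)
    have h1 : normSq (F w) < 1 := by
      have := hb w hw
      have h2 : ‖F w‖ ^ 2 < 1 := by nlinarith [norm_nonneg (F w)]
      rwa [Complex.sq_norm] at h2
    have h2 : normSq a < 1 := by
      have h2 : ‖a‖ ^ 2 < 1 := by nlinarith [norm_nonneg a]
      rwa [Complex.sq_norm] at h2
    have : normSq (F w - a) < normSq (1 - (starRingEnd ℂ) a * F w) := by nlinarith [normSq_nonneg (F w - a)]
    have := Real.sqrt_lt_sqrt (normSq_nonneg _) this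
    simpa [Complex.norm_def] using this
  -- Schwarz
  have maps : MapsTo φ (ball (0:ℂ) 1) (ball (φ 0) 1) := by
    intro w hw
    rw [hφ0]
    simpa [mem_ball, Complex.dist_eq] using hφb w hw
  have hsch := Complex.dist_le_div_mul_dist_of_mapsTo_ball hφd (maps.mono_right ball_subset_closedBall) hz
  rw [hφ0] at hsch
  simp only [dist_zero_right, one_div_one] at hsch
  -- |F z - a| ≤ |z| |1 - conj a F z|
  have hFz : ‖F z - a‖ ≤ ‖z‖ * ‖1 - (starRingEnd ℂ) a * F z‖ := by
    have hd := hden z hz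
    have : ‖φ z‖ = ‖F z - a‖ / ‖1 - (starRingEnd ℂ) a * F z‖ := by
      rw [hφ]; simp [norm_div]
    rw [this, div_le_iff₀ (norm_pos_iff.mpr hd)] at hsch
    calc ‖F z - a‖ ≤ 1 * ‖z‖ * ‖1 - (starRingEnd ℂ) a * F z‖ := hsch
      _ = ‖z‖ * ‖1 - (starRingEnd ℂ) a * F z‖ := by ring
  -- algebra
  set x := ‖F z‖ with hx
  set y := ‖a‖ with hy
  set r := ‖z‖ with hr
  have hx0 : 0 ≤ x := norm_nonneg _
  have hy0 : 0 ≤ y := norm_nonneg _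
  have hr0 : 0 ≤ r := norm_nonneg _
  have hx1 : x < 1 := hb z hz
  have hy1 : y < 1 := haa
  have hr1 : r < 1 := by simpa [mem_ball, Complex.dist_eq, hr] using hz
  set s := ((starRingEnd ℂ) a * F z).re with hs
  have hsxy : s ≤ x * y := by
    calc s ≤ ‖(starRingEnd ℂ) a * F z‖ := Complex.re_le_norm _
      _ = y * x := by rw [norm_mul, Complex.norm_conj]
      _ = x * y := mul_comm _ _
  have e1 : normSq (F z - a) = normSq (F z) + normSq a - 2*s := by
    simp only [hs, normSq_apply, sub_re, sub_im, mul_re, mul_im, conj_re, conj_im]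
    ring
  have e2 : normSq (1 - (starRingEnd ℂ) a * F z) = 1 - 2*s + normSq a * normSq (F z) := by
    simp only [hs, normSq_apply, sub_re, sub_im, mul_re, mul_im, conj_re, conj_im, one_re, one_im]
    ring
  have nx : normSq (F z) = x^2 := by rw [hx, Complex.sq_norm]
  have ny : normSq a = y^2 := by rw [hy, Complex.sq_norm]
  have P0 : ‖F z - a‖^2 ≤ (r * ‖1 - (starRingEnd ℂ) a * F z‖)^2 := by
    apply sq_le_sq'
    · have := norm_nonneg (F z - a)
      have := mul_nonneg hr0 (norm_nonneg (1 - (starRingEnd ℂ) a * F z))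
      linarith
    · exact hFz
  have h1 : ‖F z - a‖^2 = x^2+y^2-2*s := by rw [Complex.sq_norm, e1, nx, ny]
  have h2 : ‖1 - (starRingEnd ℂ) a * F z‖^2 = 1-2*s+y^2*x^2 := by
    rw [Complex.sq_norm, e2, nx, ny]
  have P : x^2 + y^2 - 2*s ≤ r^2*(1 - 2*s + y^2*x^2) := by
    rw [h1] at P0
    have h3 : (r * ‖1 - (starRingEnd ℂ) a * F z‖)^2
        = r^2 * (‖1 - (starRingEnd ℂ) a * F z‖^2) := by ring
    rw [h3, h2] at P0
    exact P0
  have hxy1 : 0 ≤ 1 - x*y := by nlinarith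
  have prodh : 0 ≤ (1 - r^2) * (x*y - s) := mul_nonneg (by nlinarith) (by linarith)
  have step1 : (x-y)^2 ≤ (r*(1-x*y))^2 := by nlinarith [P, prodh]
  have step2 : x - y ≤ r*(1-x*y) := by nlinarith [step1, mul_nonneg hr0 hxy1]
  rw [le_div_iff₀ (by nlinarith : (0:ℝ) < 1 + y * r)]
  nlinarith [step2]

lemma re_starlike (h : ℂ → ℂ)
    (hd : DifferentiableOn ℂ h (Metric.ball (0:ℂ) 1))
    (h0 : h 0 = 0)
    (hinj : Set.InjOn h (Metric.ball (0:ℂ) 1))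
    (hstar : ∀ w ∈ h '' (Metric.ball (0:ℂ) 1), segment ℝ 0 w ⊆ h '' (Metric.ball (0:ℂ) 1))
    (hps : ∀ z ∈ Metric.ball (0:ℂ) 1, deriv h z ≠ 0)
    {z : ℂ} (hz : z ∈ Metric.ball (0:ℂ) 1) (hz0 : z ≠ 0) :
    0 ≤ (z * deriv h z / h z).re := by
  have hball0 : (0:ℂ) ∈ ball (0:ℂ) 1 := by simp
  have hA : AnalyticOnNhd ℂ h (ball (0:ℂ) 1) := hd.analyticOnNhd isOpen_ball
  have strict : ∀ u ∈ ball (0:ℂ) 1, HasStrictDerivAt h (deriv h u) u :=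
    fun u hu => analyticAt_strictDeriv (hA u hu)
  -- existence of preimages of t • h w
  have hex : ∀ w ∈ ball (0:ℂ) 1, ∀ t ∈ Icc (0:ℝ) 1, ∃ u ∈ ball (0:ℂ) 1, h u = (t:ℂ) * h w := by
    intro w hw t ht
    have hseg : (t:ℂ) * h w ∈ segment ℝ 0 (h w) := by
      refine ⟨1 - t, t, by linarith [ht.2], ht.1, by ring, ?_⟩
      simp [Complex.real_smul]
    obtain ⟨u, hu, hu2⟩ := hstar (h w) ⟨w, hw, rfl⟩ hseg
    exact ⟨u, hu, hu2⟩
  set inv := Function.invFunOn h (ball (0:ℂ) 1) with hinvdef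
  have hinv_left : ∀ u ∈ ball (0:ℂ) 1, inv (h u) = u := fun u hu =>
    hinj.leftInvOn_invFunOn hu
  have hinv_mem : ∀ b, (∃ u ∈ ball (0:ℂ) 1, h u = b) → inv b ∈ ball (0:ℂ) 1 :=
    fun b hb => Function.invFunOn_mem hb
  -- inv has a derivative at every point of the image
  have inv_deriv : ∀ u₀ ∈ ball (0:ℂ) 1, HasDerivAt inv (deriv h u₀)⁻¹ (h u₀) := by
    intro u₀ hu₀
    have hs := strict u₀ hu₀
    have hne := hps u₀ hu₀
    set li := hs.localInverse h (deriv h u₀) u₀ hne with hli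
    have hFD := hs.hasStrictFDerivAt_equiv hne
    have ev1 : ∀ᶠ x in 𝓝 u₀, li (h x) = x := hFD.eventually_left_inverse
    have ev2 : ∀ᶠ b' in 𝓝 (h u₀), h (li b') = b' := hFD.eventually_right_inverse
    have hlival : li (h u₀) = u₀ := hFD.localInverse_apply_image
    have hcont : ContinuousAt li (h u₀) := hFD.localInverse_continuousAt
    have ev3 : ∀ᶠ b' in 𝓝 (h u₀), li b' ∈ ball (0:ℂ) 1 := by
      have : ball (0:ℂ) 1 ∈ 𝓝 (li (h u₀)) := by
        rw [hlival]; exact isOpen_ball.mem_nhds hu₀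
      exact hcont.eventually_mem this
    have ev : inv =ᶠ[𝓝 (h u₀)] li := by
      filter_upwards [ev2, ev3] with b' h2 h3
      have := hinv_left (li b') h3
      rw [h2] at this
      exact this
    have hli_deriv : HasDerivAt li (deriv h u₀)⁻¹ (h u₀) :=
      (hs.to_localInverse hne).hasDerivAt
    exact hli_deriv.congr_of_eventuallyEq ev
  -- Schwarz for ψ_t
  have schwarz : ∀ t ∈ Icc (0:ℝ) 1, ‖inv ((t:ℂ) * h z)‖ ≤ ‖z‖ := by
    intro t ht
    set ψ : ℂ → ℂ := fun w => inv ((t:ℂ) * h w) with hψ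
    have hψd : DifferentiableOn ℂ ψ (ball (0:ℂ) 1) := by
      intro w hw
      obtain ⟨u, hu, hu2⟩ := hex w hw t ht
      have h1 : DifferentiableAt ℂ inv ((t:ℂ) * h w) := by
        rw [← hu2]
        exact (inv_deriv u hu).differentiableAt
      have h2 : DifferentiableAt ℂ (fun w => (t:ℂ) * h w) w :=
        (differentiableAt_const _).mul (hd.differentiableAt (isOpen_ball.mem_nhds hw))
      exact (h1.comp w h2).differentiableWithinAt
    have hψ0 : ψ 0 = 0 := by
      have e : (t:ℂ) * h 0 = h 0 := by rw [h0]; ring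
      show inv ((t:ℂ) * h 0) = 0
      rw [e]
      exact hinv_left 0 hball0
    have maps : MapsTo ψ (ball (0:ℂ) 1) (ball (ψ 0) 1) := by
      intro w hw
      rw [hψ0, mem_ball, dist_zero_right]
      obtain ⟨u, hu, hu2⟩ := hex w hw t ht
      have : ψ w ∈ ball (0:ℂ) 1 := hinv_mem _ ⟨u, hu, hu2⟩
      simpa [mem_ball, dist_zero_right] using this
    have := Complex.dist_le_div_mul_dist_of_mapsTo_ball hψd (maps.mono_right ball_subset_closedBall) hz
    rw [hψ0] at this
    simpa [Complex.dist_eq, Complex.norm_def] using this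
  -- the path c t = inv (t * h z)
  have hzne : h z ≠ 0 := by
    intro hc
    exact hz0 (hinj hz hball0 (by rw [hc, h0]))
  set c : ℝ → ℂ := fun t => inv ((t:ℂ) * h z) with hc
  have hc1 : c 1 = z := by
    rw [hc]; simp only [Complex.ofReal_one, one_mul]
    exact hinv_left z hz
  have hcd : HasDerivAt c (h z * (deriv h z)⁻¹) 1 := by
    have hu : HasDerivAt (fun t : ℝ => (t:ℂ) * h z) (h z) 1 := by
      have := (Complex.ofRealCLM.hasDerivAt (x := (1:ℝ))).mul_const (h z)
      simpa using this
    have hi : HasDerivAt inv (deriv h z)⁻¹ ((1:ℝ) * h z : ℂ) := by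
      have := inv_deriv z hz
      simpa using this
    have hres := hi.hasFDerivAt.restrictScalars ℝ
    have hcomp := hres.comp_hasDerivAt (1:ℝ) hu
    have : HasDerivAt (fun t : ℝ => inv ((t:ℂ) * h z)) (h z * (deriv h z)⁻¹) 1 := by
      simpa [Function.comp_def, mul_comm] using hcomp
    exact this
  -- nonnegativity of Re(conj z * (z - c t)) for t ∈ Ico 0 1
  have evneg : ∀ t ∈ Icc (0:ℝ) 1, 0 ≤ ((starRingEnd ℂ) z * (z - c t)).re := by
    intro t ht
    have hct := schwarz t ht
    have e1 : ((starRingEnd ℂ) z * (z - c t)).re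
        = normSq z - ((starRingEnd ℂ) z * c t).re := by
      rw [mul_sub, Complex.sub_re]
      have : ((starRingEnd ℂ) z * z).re = normSq z := by
        rw [mul_comm, Complex.mul_conj, Complex.ofReal_re]
      rw [this]
    have h2 : ((starRingEnd ℂ) z * c t).re ≤ ‖z‖ * ‖c t‖ := by
      calc ((starRingEnd ℂ) z * c t).re ≤ ‖(starRingEnd ℂ) z * c t‖ :=
            Complex.re_le_norm _
        _ = ‖z‖ * ‖c t‖ := by rw [norm_mul, Complex.norm_conj]
    have h3 : ‖z‖ * ‖c t‖ ≤ ‖z‖ * ‖z‖ :=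
      mul_le_mul_of_nonneg_left hct (norm_nonneg z)
    have h4 : normSq z = ‖z‖ * ‖z‖ := (Complex.normSq_eq_norm_sq z).trans (sq _)
    rw [e1]
    linarith
  -- pass to the limit t → 1⁻
  have ht1 : Tendsto (slope c 1) (𝓝[<] (1:ℝ)) (𝓝 (h z * (deriv h z)⁻¹)) :=
    (hasDerivAt_iff_tendsto_slope.mp hcd).mono_left
      (nhdsWithin_mono 1 (fun x hx => ne_of_lt hx))
  have hre : Tendsto (fun t => ((starRingEnd ℂ) z * slope c 1 t).re) (𝓝[<] (1:ℝ))
      (𝓝 (((starRingEnd ℂ) z * (h z * (deriv h z)⁻¹)).re)) :=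
    (Complex.continuous_re.tendsto _).comp (ht1.const_mul _)
  have hnn : ∀ᶠ t in 𝓝[<] (1:ℝ), 0 ≤ ((starRingEnd ℂ) z * slope c 1 t).re := by
    filter_upwards [Ioo_mem_nhdsLT_of_mem (show (1:ℝ) ∈ Ioc 0 1 by constructor <;> norm_num)]
      with t ht'
    have h1 := evneg t ⟨ht'.1.le, ht'.2.le⟩
    have e : slope c 1 t = (1 - t)⁻¹ • (z - c t) := by
      rw [slope, vsub_eq_sub, hc1, show t - 1 = -(1 - t) by ring,
        show c t - z = -(z - c t) by ring, inv_neg, neg_smul, smul_neg, neg_neg]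
    rw [e, Complex.real_smul, show (starRingEnd ℂ) z * (((1 - t)⁻¹ : ℝ) * (z - c t))
      = ((1 - t)⁻¹ : ℝ) * ((starRingEnd ℂ) z * (z - c t)) by push_cast; ring]
    rw [Complex.re_ofReal_mul]
    have : (0:ℝ) < 1 - t := by linarith [ht'.2]
    exact mul_nonneg (inv_nonneg.mpr this.le) h1
  have hlim : 0 ≤ ((starRingEnd ℂ) z * (h z * (deriv h z)⁻¹)).re := ge_of_tendsto hre hnn
  -- convert to the statement about z h'/h
  set A := (starRingEnd ℂ) z * (h z * (deriv h z)⁻¹) with hA'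
  have hA0 : A ≠ 0 := by
    apply mul_ne_zero
    · simpa using hz0
    · exact mul_ne_zero hzne (inv_ne_zero (hps z hz))
  have hB : z * deriv h z / h z = (normSq z : ℂ) / A := by
    rw [eq_div_iff hA0, hA']
    field_simp [hps z hz]
    exact Complex.mul_conj z
  rw [hB, Complex.div_re]
  apply add_nonneg
  · apply div_nonneg _ (normSq_nonneg _)
    apply mul_nonneg _ hlim
    simpa using normSq_nonneg z
  · simp

-- distortion for starlike-like h, assuming Re (h'/H) ≥ 0 where H = dslope h 0
lemma distortion (h : ℂ → ℂ)
    (hd : DifferentiableOn ℂ h (Metric.ball (0:ℂ) 1))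
    (h0 : h 0 = 0) (h1 : deriv h 0 = 1)
    (hinj : Set.InjOn h (Metric.ball (0:ℂ) 1))
    (hrep : ∀ z ∈ Metric.ball (0:ℂ) 1, z ≠ 0 → 0 ≤ (z * deriv h z / h z).re) :
    ∀ z ∈ Metric.ball (0:ℂ) 1,
      ‖deriv h z‖ ≤ (1 + ‖z‖) / (1 - ‖z‖)^3
      ∧ ‖h z‖ ≤ ‖z‖ / (1 - ‖z‖)^2 := by
  have hball0 : (0:ℂ) ∈ ball (0:ℂ) 1 := by simp
  set H := dslope h 0 with hH
  have HdOn : DifferentiableOn ℂ H (ball (0:ℂ) 1) :=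
    (differentiableOn_dslope (isOpen_ball.mem_nhds hball0)).mpr hd
  have H0 : H 0 = 1 := by rw [hH, dslope_same]; exact h1
  have hzH : ∀ z : ℂ, z * H z = h z := by
    intro z
    have := sub_smul_dslope h 0 z
    rw [sub_zero, h0, sub_zero, smul_eq_mul] at this
    exact this
  have hdiffd : DifferentiableOn ℂ (deriv h) (ball (0:ℂ) 1) :=
    ((hd.analyticOnNhd isOpen_ball).deriv).differentiableOn
  have Hne : ∀ z ∈ ball (0:ℂ) 1, H z ≠ 0 := by
    intro z hz
    rcases eq_or_ne z 0 with rfl | hz0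
    · rw [H0]; exact one_ne_zero
    · intro hc
      have : h z = 0 := by rw [← hzH z, hc, mul_zero]
      exact hz0 (hinj hz hball0 (by rw [this, h0]))
  have re_p : ∀ z ∈ ball (0:ℂ) 1, 0 ≤ (deriv h z / H z).re := by
    intro z hz
    rcases eq_or_ne z 0 with rfl | hz0
    · rw [h1, H0]; norm_num
    · have := hrep z hz hz0
      have e : deriv h z / H z = z * deriv h z / h z := by
        rw [← hzH z, mul_div_mul_left _ _ hz0]
      rw [e]; exact this
  have den_ne : ∀ z ∈ ball (0:ℂ) 1, deriv h z + H z ≠ 0 := by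
    intro z hz hc
    have e : deriv h z = -H z := by linear_combination hc
    have : (deriv h z / H z).re = -1 := by
      rw [e, neg_div, div_self (Hne z hz)]
      rfl
    have := re_p z hz
    rw [‹(deriv h z / H z).re = -1›] at this
    linarith
  set q : ℂ → ℂ := fun z => (deriv h z - H z) / (deriv h z + H z) with hq
  have qd : DifferentiableOn ℂ q (ball (0:ℂ) 1) :=
    (hdiffd.sub HdOn).div (hdiffd.add HdOn) den_ne
  have q0 : q 0 = 0 := by
    rw [hq]; simp only
    rw [h1, H0, sub_self, zero_div]
  have re_dH : ∀ z ∈ ball (0:ℂ) 1, 0 ≤ (deriv h z * (starRingEnd ℂ) (H z)).re := by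
    intro z hz
    have e : (deriv h z * (starRingEnd ℂ) (H z)).re = (deriv h z / H z).re * normSq (H z) := by
      rw [Complex.div_re, Complex.mul_re, conj_re, conj_im]
      have := Complex.normSq_pos.mpr (Hne z hz)
      field_simp
      ring
    rw [e]
    exact mul_nonneg (re_p z hz) (normSq_nonneg _)
  have qle : ∀ z ∈ ball (0:ℂ) 1, ‖q z‖ ≤ 1 := by
    intro z hz
    rw [hq]; simp only [norm_div]
    rw [div_le_one (norm_pos_iff.mpr (den_ne z hz))]
    have h1' : normSq (deriv h z - H z) ≤ normSq (deriv h z + H z) := by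
      rw [Complex.normSq_sub, Complex.normSq_add]
      have := re_dH z hz
      linarith
    have := Real.sqrt_le_sqrt h1'
    simpa [Complex.norm_def] using this
  have qsch : ∀ z ∈ ball (0:ℂ) 1, ‖q z‖ ≤ ‖z‖ := by
    intro z hz
    have key : ∀ ε : ℝ, 0 < ε → ‖q z‖ ≤ (1 + ε) * ‖z‖ := by
      intro ε hε
      have maps : MapsTo q (ball (0:ℂ) 1) (ball (q 0) (1 + ε)) := by
        intro w hw
        rw [q0, mem_ball, dist_zero_right]
        calc ‖q w‖ = ‖q w‖ := rfl
          _ ≤ 1 := qle w hw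
          _ < 1 + ε := by linarith
      have := Complex.dist_le_div_mul_dist_of_mapsTo_ball qd (maps.mono_right ball_subset_closedBall) hz
      rw [q0] at this
      simpa [Complex.dist_eq, div_one] using this
    rcases eq_or_lt_of_le (norm_nonneg z) with hz0 | hz0
    · have := key 1 one_pos
      rw [← hz0] at this ⊢
      simpa using this
    · by_contra hcon
      push_neg at hcon
      have hd2 : 0 < (‖q z‖ - ‖z‖) / (2 * ‖z‖) :=
        div_pos (by linarith) (by linarith)
      have hqaz : ((‖q z‖ - ‖z‖) / (2 * ‖z‖)) * ‖z‖
          = (‖q z‖ - ‖z‖) / 2 := by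
        field_simp
      have := key _ hd2
      rw [add_mul, one_mul, hqaz] at this
      linarith
  -- p = (1+q)/(1-q)
  have h1q : ∀ z ∈ ball (0:ℂ) 1, (1:ℂ) - q z ≠ 0 := by
    intro z hz hc
    have hzr : ‖z‖ < 1 := by simpa [mem_ball, Complex.dist_eq] using hz
    have : ‖1 - q z‖ ≥ 1 - ‖z‖ := by
      have h2 := qsch z hz
      have h3 : ‖(1:ℂ)‖ - ‖q z‖ ≤ ‖(1:ℂ) - q z‖ := norm_sub_norm_le _ _
      simp only [norm_one] at h3
      linarith
    rw [hc] at this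
    simp only [norm_zero] at this
    linarith
  have ppq : ∀ z ∈ ball (0:ℂ) 1, deriv h z / H z = (1 + q z) / (1 - q z) := by
    intro z hz
    rw [div_eq_div_iff (Hne z hz) (h1q z hz), hq]
    field_simp [den_ne z hz]
    ring
  have pbound : ∀ z ∈ ball (0:ℂ) 1,
      ‖deriv h z / H z - 1‖ ≤ 2 * ‖z‖ / (1 - ‖z‖) := by
    intro z hz
    have hzr : ‖z‖ < 1 := by simpa [mem_ball, Complex.dist_eq] using hz
    have e : deriv h z / H z - 1 = 2 * q z / (1 - q z) := by
      rw [ppq z hz]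
      field_simp [h1q z hz]
      ring
    rw [e, norm_div, norm_mul]
    have hden : 1 - ‖z‖ ≤ ‖1 - q z‖ := by
      have h2 := qsch z hz
      have h3 : ‖(1:ℂ)‖ - ‖q z‖ ≤ ‖(1:ℂ) - q z‖ := norm_sub_norm_le _ _
      simp only [norm_one] at h3
      linarith
    refine div_le_div₀ (by positivity) ?_ (by linarith) hden
    rw [Complex.norm_two]
    linarith [qsch z hz, norm_nonneg (q z)]
  have pabs : ∀ z ∈ ball (0:ℂ) 1,
      ‖deriv h z / H z‖ ≤ (1 + ‖z‖) / (1 - ‖z‖) := by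
    intro z hz
    have hzr : ‖z‖ < 1 := by simpa [mem_ball, Complex.dist_eq] using hz
    have h2 := pbound z hz
    have h3 : ‖deriv h z / H z‖ ≤ ‖deriv h z / H z - 1‖ + 1 := by
      calc ‖deriv h z / H z‖ = ‖(deriv h z / H z - 1) + 1‖ := by
            rw [sub_add_cancel]
        _ ≤ ‖deriv h z / H z - 1‖ + ‖(1:ℂ)‖ := norm_add_le _ _
        _ = ‖deriv h z / H z - 1‖ + 1 := by rw [norm_one]
    have e : (1 + ‖z‖) / (1 - ‖z‖)
        = 2 * ‖z‖ / (1 - ‖z‖) + 1 := by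
      have h1r' : (1:ℝ) - ‖z‖ ≠ 0 := by linarith
      field_simp
      ring
    rw [e]
    linarith
  -- identity w * H'(w) = h'(w) - H(w)
  have hzH' : ∀ w ∈ ball (0:ℂ) 1, w * deriv H w = deriv h w - H w := by
    intro w hw
    have hfun : (fun w => w * H w) = h := funext hzH
    have hHd : HasDerivAt H (deriv H w) w :=
      (HdOn.differentiableAt (isOpen_ball.mem_nhds hw)).hasDerivAt
    have hprod : HasDerivAt (fun w => w * H w) (1 * H w + w * deriv H w) w :=
      (hasDerivAt_id w).mul hHd
    have : deriv h w = 1 * H w + w * deriv H w := by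
      rw [← hfun]
      exact hprod.deriv
    linear_combination -this
  -- growth of H along rays
  have growth : ∀ z ∈ ball (0:ℂ) 1, normSq (H z) * (1 - ‖z‖)^4 ≤ 1 := by
    intro z hz
    have hzr : ‖z‖ < 1 := by simpa [mem_ball, Complex.dist_eq] using hz
    set r := ‖z‖ with hr
    have hr0 : 0 ≤ r := norm_nonneg z
    have mem : ∀ t ∈ Icc (0:ℝ) 1, ((t:ℂ) * z) ∈ ball (0:ℂ) 1 := by
      intro t ht
      rw [mem_ball, dist_zero_right, norm_mul, Complex.norm_real, Real.norm_eq_abs,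
        _root_.abs_of_nonneg ht.1]
      calc t * r ≤ 1 * r := mul_le_mul_of_nonneg_right ht.2 hr0
        _ = r := one_mul r
        _ < 1 := hzr
    set u : ℝ → ℂ := fun t => H ((t:ℂ) * z) with hu
    have uderiv : ∀ t ∈ Icc (0:ℝ) 1, HasDerivAt u (z * deriv H ((t:ℂ) * z)) t := by
      intro t ht
      have hHd : HasDerivAt H (deriv H ((t:ℂ)*z)) ((t:ℂ)*z) :=
        (HdOn.differentiableAt (isOpen_ball.mem_nhds (mem t ht))).hasDerivAt
      have hmul : HasDerivAt (fun s : ℝ => (s:ℂ) * z) ((1:ℂ) * z) t := by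
        simpa using (Complex.ofRealCLM.hasDerivAt (x := t)).mul_const z
      have hcomp := (hHd.hasFDerivAt.restrictScalars ℝ).comp_hasDerivAt t hmul
      have : HasDerivAt (fun s : ℝ => H ((s:ℂ) * z)) (z * deriv H ((t:ℂ)*z)) t := by
        simpa [Function.comp_def, mul_comm] using hcomp
      exact this
    set v : ℝ → ℝ := fun t => normSq (u t) with hv
    have vderiv : ∀ t ∈ Icc (0:ℝ) 1, HasDerivAt v
        (2 * ((starRingEnd ℂ) (u t) * (z * deriv H ((t:ℂ) * z))).re) t := by
      intro t ht
      have hud := uderiv t ht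
      have hur : HasDerivAt (fun s => (u s).re) ((z * deriv H ((t:ℂ)*z)).re) t :=
        Complex.reCLM.hasFDerivAt.comp_hasDerivAt t hud
      have hui : HasDerivAt (fun s => (u s).im) ((z * deriv H ((t:ℂ)*z)).im) t :=
        Complex.imCLM.hasFDerivAt.comp_hasDerivAt t hud
      have := (hur.mul hur).add (hui.mul hui)
      have e : (fun s => (u s).re * (u s).re + (u s).im * (u s).im) = v := by
        funext s
        rw [hv]
        simp [Complex.normSq_apply]
      rw [show (((fun s => (u s).re) * fun s => (u s).re) + (fun s => (u s).im) * fun s => (u s).im) = v from e] at this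
      refine this.congr_deriv ?_
      simp [Complex.mul_re, Complex.conj_re, Complex.conj_im]
      ring
    set W : ℝ → ℝ := fun t => v t * (1 - t*r)^4 with hW
    have Wderiv : ∀ t ∈ Icc (0:ℝ) 1, HasDerivAt W
        (2 * ((starRingEnd ℂ) (u t) * (z * deriv H ((t:ℂ) * z))).re * (1 - t*r)^4
          + v t * (4*(1 - t*r)^3 * (-r))) t := by
      intro t ht
      have hpoly : HasDerivAt (fun t : ℝ => 1 - t*r) (-r) t := by
        simpa using ((hasDerivAt_id t).mul_const r).const_sub 1
      have hpow := hpoly.pow 4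
      have := (vderiv t ht).mul hpow
      refine this.congr_deriv ?_
      norm_num [Pi.pow_apply]
    have derivle : ∀ t ∈ Ioo (0:ℝ) 1, deriv W t ≤ 0 := by
      intro t ht
      have htI : t ∈ Icc (0:ℝ) 1 := ⟨ht.1.le, ht.2.le⟩
      rw [(Wderiv t htI).deriv]
      set w := (t:ℂ) * z with hw
      have hwball := mem t htI
      have hwabs : ‖w‖ = t * r := by
        rw [hw, norm_mul, Complex.norm_real, Real.norm_eq_abs, _root_.abs_of_nonneg ht.1.le]
      have htr : 0 < 1 - t*r := by
        nlinarith [ht.1, ht.2, hr0, hzr]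
      -- t * v' = 2 * Re((p-1)) * normSq(H w)
      have idc : (starRingEnd ℂ) (H w) * (deriv h w - H w)
          = (deriv h w / H w - 1) * (normSq (H w) : ℂ) := by
        rw [← Complex.mul_conj (H w)]
        field_simp [Hne w hwball]
      have idt : t * (2 * ((starRingEnd ℂ) (u t) * (z * deriv H w)).re)
          = 2 * ((deriv h w / H w - 1).re * normSq (H w)) := by
        have e1 : ((t:ℝ) : ℂ) * ((starRingEnd ℂ) (u t) * (z * deriv H w))
            = (starRingEnd ℂ) (H w) * (deriv h w - H w) := by
          rw [← hzH' w hwball, hu]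
          simp only
          rw [hw]
          ring
        have e2 : t * ((starRingEnd ℂ) (u t) * (z * deriv H w)).re
            = (((t:ℝ):ℂ) * ((starRingEnd ℂ) (u t) * (z * deriv H w))).re := by
          rw [Complex.re_ofReal_mul]
        have e3 : ((deriv h w / H w - 1) * (normSq (H w) : ℂ)).re
            = (deriv h w / H w - 1).re * normSq (H w) := by
          rw [mul_comm, Complex.re_ofReal_mul]
          ring
        calc t * (2 * ((starRingEnd ℂ) (u t) * (z * deriv H w)).re)
            = 2 * (t * ((starRingEnd ℂ) (u t) * (z * deriv H w)).re) := by ring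
          _ = 2 * ((((t:ℝ):ℂ) * ((starRingEnd ℂ) (u t) * (z * deriv H w))).re) := by rw [e2]
          _ = 2 * (((starRingEnd ℂ) (H w) * (deriv h w - H w)).re) := by rw [e1]
          _ = 2 * (((deriv h w / H w - 1) * (normSq (H w) : ℂ)).re) := by rw [idc]
          _ = 2 * ((deriv h w / H w - 1).re * normSq (H w)) := by rw [e3]
      have rebound : (deriv h w / H w - 1).re ≤ 2*(t*r)/(1 - t*r) := by
        calc (deriv h w / H w - 1).re ≤ ‖deriv h w / H w - 1‖ := Complex.re_le_norm _
          _ ≤ 2 * ‖w‖ / (1 - ‖w‖) := pbound w hwball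
          _ = 2*(t*r)/(1 - t*r) := by rw [hwabs]
      have vnn : 0 ≤ v t := normSq_nonneg _
      have hvtw : v t = normSq (H w) := by rw [hv, hu, hw]
      -- v' t ≤ v t * 4r/(1-tr), multiplied by t:
      have key : t * (2 * ((starRingEnd ℂ) (u t) * (z * deriv H w)).re)
          ≤ t * (v t * (4*r/(1 - t*r))) := by
        rw [idt, hvtw]
        have hns : 0 ≤ normSq (H w) := normSq_nonneg _
        have := mul_le_mul_of_nonneg_right rebound hns
        calc 2 * ((deriv h w / H w - 1).re * normSq (H w))
            ≤ 2 * ((2*(t*r)/(1 - t*r)) * normSq (H w)) := by linarith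
          _ = t * (normSq (H w) * (4*r/(1 - t*r))) := by
              field_simp
              ring
      have key2 : 2 * ((starRingEnd ℂ) (u t) * (z * deriv H w)).re
          ≤ v t * (4*r/(1 - t*r)) := le_of_mul_le_mul_left key ht.1
      have hp4 : (0:ℝ) < (1 - t*r)^4 := by positivity
      have := mul_le_mul_of_nonneg_right key2 (le_of_lt hp4)
      have efin : v t * (4*r/(1 - t*r)) * (1 - t*r)^4 = v t * (4*(1 - t*r)^3 * r) := by
        field_simp
      rw [efin] at this
      nlinarith [this]
    -- antitone
    have Wcont : ContinuousOn W (Icc (0:ℝ) 1) :=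
      fun t ht => ((Wderiv t ht).continuousAt).continuousWithinAt
    have Wdiff : DifferentiableOn ℝ W (interior (Icc (0:ℝ) 1)) := by
      rw [interior_Icc]
      exact fun t ht => ((Wderiv t ⟨ht.1.le, ht.2.le⟩).differentiableAt).differentiableWithinAt
    have Wanti : AntitoneOn W (Icc (0:ℝ) 1) := by
      apply antitoneOn_of_deriv_nonpos (convex_Icc 0 1) Wcont Wdiff
      rw [interior_Icc]
      exact derivle
    have hW10 := Wanti (left_mem_Icc.mpr zero_le_one) (right_mem_Icc.mpr zero_le_one) zero_le_one
    have hW0 : W 0 = 1 := by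
      rw [hW, hv, hu]
      norm_num [H0]
    have hW1 : W 1 = normSq (H z) * (1 - r)^4 := by
      rw [hW, hv, hu]
      norm_num
    rw [hW0, hW1] at hW10
    exact hW10
  -- conclude
  intro z hz
  have hzr : ‖z‖ < 1 := by simpa [mem_ball, Complex.dist_eq] using hz
  set r := ‖z‖ with hr
  have hr0 : 0 ≤ r := norm_nonneg z
  have h1r : (0:ℝ) < 1 - r := by linarith
  have Habs : ‖H z‖ ≤ 1/(1-r)^2 := by
    have hg := growth z hz
    have hns : normSq (H z) ≤ (1/(1-r)^2)^2 := by
      have e : (1/(1-r)^2)^2 = 1/(1-r)^4 := by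
        field_simp
      rw [e, le_div_iff₀ (by positivity)]
      linarith
    have := Real.sqrt_le_sqrt hns
    rw [Real.sqrt_sq (by positivity)] at this
    simpa [Complex.norm_def] using this
  constructor
  · have e : deriv h z = (deriv h z / H z) * H z := by
      field_simp [Hne z hz]
    rw [e, norm_mul]
    calc ‖deriv h z / H z‖ * ‖H z‖
        ≤ ((1+r)/(1-r)) * (1/(1-r)^2) := by
          exact mul_le_mul (pabs z hz) Habs (norm_nonneg _)
            (div_nonneg (by linarith) h1r.le)
      _ = (1+r)/(1-r)^3 := by
          rw [show (1-r)^3 = (1-r)*(1-r)^2 by ring, div_mul_div_comm, mul_one]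
  · have e : h z = z * H z := (hzH z).symm
    rw [e, norm_mul]
    calc ‖z‖ * ‖H z‖ ≤ r * (1/(1-r)^2) := by
          apply mul_le_mul_of_nonneg_left Habs hr0
      _ = r/(1-r)^2 := by rw [mul_div_assoc', mul_one]

theorem stmt13
    (h g : ℂ → ℂ) (α : ℝ) (hα : α ∈ Set.Ico (0:ℝ) 1)
    (hd : DifferentiableOn ℂ h (Metric.ball (0:ℂ) 1))
    (gd : DifferentiableOn ℂ g (Metric.ball (0:ℂ) 1))
    (h0 : h 0 = 0) (h1 : deriv h 0 = 1) (g0 : g 0 = 0)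
    (hb1 : ‖deriv g 0‖ = α)
    (hsp : ∀ z ∈ Metric.ball (0:ℂ) 1, ‖deriv g z‖ < ‖deriv h z‖)
    (hinj : Set.InjOn h (Metric.ball (0:ℂ) 1))
    (hstar : ∀ w ∈ h '' (Metric.ball (0:ℂ) 1), segment ℝ 0 w ⊆ h '' (Metric.ball (0:ℂ) 1))
 :
    ∀ z ∈ Metric.ball (0:ℂ) 1,
      ‖g z‖ ≤ ((1 - α) / (1 + α)) ^ 2 * Real.log ((1 + α * ‖z‖) / (1 - ‖z‖)) + 1 * ‖z‖ / (1 - ‖z‖) ^ 2 - ((1 - α) / (1 + α)) * (2 * ‖z‖ / (1 - ‖z‖)) := by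
  obtain ⟨hα0, hα1⟩ := hα
  have hps : ∀ z ∈ Metric.ball (0:ℂ) 1, deriv h z ≠ 0 := by
    intro z hz
    have := hsp z hz
    intro hc
    rw [hc] at this
    simp at this
    exact absurd this (not_lt.mpr (norm_nonneg _))
  -- the dilatation ω = g'/h'
  set ω : ℂ → ℂ := fun z => deriv g z / deriv h z with hω
  have hωd : DifferentiableOn ℂ ω (ball (0:ℂ) 1) :=
    (((gd.analyticOnNhd isOpen_ball).deriv).differentiableOn).div
      (((hd.analyticOnNhd isOpen_ball).deriv).differentiableOn) hps
  have hωb : ∀ w ∈ ball (0:ℂ) 1, ‖ω w‖ < 1 := by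
    intro w hw
    rw [hω]
    simp only [norm_div]
    rw [div_lt_one (norm_pos_iff.mpr (hps w hw))]
    exact hsp w hw
  have hω0 : ‖ω 0‖ = α := by
    rw [hω]
    simp only
    rw [h1, div_one, hb1]
  -- pointwise bound on |g'|
  have gbound : ∀ w ∈ ball (0:ℂ) 1, ‖deriv g w‖ ≤
      ((α + ‖w‖) / (1 + α * ‖w‖)) *
        ((1 + ‖w‖) / (1 - ‖w‖)^3) := by
    intro w hw
    have hwr : ‖w‖ < 1 := by simpa [mem_ball, Complex.dist_eq] using hw
    have hSP := schwarz_pick hωd hωb hw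
    rw [hω0] at hSP
    have hdist := (distortion h hd h0 h1 hinj
      (fun z hz hz0 => re_starlike h hd h0 hinj hstar hps hz hz0) w hw).1
    have e : deriv g w = ω w * deriv h w := by
      rw [hω]
      simp only
      rw [div_mul_cancel₀ _ (hps w hw)]
    rw [e, norm_mul]
    apply mul_le_mul hSP hdist (norm_nonneg _)
    apply div_nonneg (by linarith [norm_nonneg w]) (by nlinarith [norm_nonneg w])
  -- integration along the ray
  intro z hz
  have hzr : ‖z‖ < 1 := by simpa [mem_ball, Complex.dist_eq] using hz
  set r := ‖z‖ with hr
  have hr0 : 0 ≤ r := norm_nonneg z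
  set β := (1 - α)/(1 + α) with hβ
  have hα1' : (0:ℝ) < 1 + α := by linarith
  have hβ0 : 0 ≤ β := div_nonneg (by linarith) hα1'.le
  have mem : ∀ t ∈ Icc (0:ℝ) 1, ((t:ℂ) * z) ∈ ball (0:ℂ) 1 := by
    intro t ht
    rw [mem_ball, dist_zero_right, norm_mul, Complex.norm_real, Real.norm_eq_abs,
      _root_.abs_of_nonneg ht.1]
    nlinarith [ht.2]
  have habs : ∀ t ∈ Icc (0:ℝ) 1, ‖(t:ℂ) * z‖ = t * r := by
    intro t ht
    rw [norm_mul, Complex.norm_real, Real.norm_eq_abs, _root_.abs_of_nonneg ht.1]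
  have hden1 : ∀ t ∈ Icc (0:ℝ) 1, (0:ℝ) < 1 - t*r := by
    intro t ht
    nlinarith [ht.1, ht.2, hr0, hzr]
  have hden2 : ∀ t ∈ Icc (0:ℝ) 1, (0:ℝ) < 1 + α*(t*r) := by
    intro t ht
    have := mul_nonneg hα0 (mul_nonneg ht.1 hr0)
    linarith
  -- FTC for g along the ray
  have γderiv : ∀ t ∈ Icc (0:ℝ) 1,
      HasDerivAt (fun s : ℝ => g ((s:ℂ) * z)) (z * deriv g ((t:ℂ)*z)) t := by
    intro t ht
    have hgd : HasDerivAt g (deriv g ((t:ℂ)*z)) ((t:ℂ)*z) :=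
      (gd.differentiableAt (isOpen_ball.mem_nhds (mem t ht))).hasDerivAt
    have hmul : HasDerivAt (fun s : ℝ => (s:ℂ) * z) ((1:ℂ) * z) t := by
      simpa using (Complex.ofRealCLM.hasDerivAt (x := t)).mul_const z
    have hcomp := (hgd.hasFDerivAt.restrictScalars ℝ).comp_hasDerivAt t hmul
    simpa [Function.comp_def, mul_comm] using hcomp
  have γcont : ContinuousOn (fun t : ℝ => z * deriv g ((t:ℂ)*z)) (Icc (0:ℝ) 1) := by
    have contg : ContinuousOn (deriv g) (ball (0:ℂ) 1) :=
      (((gd.analyticOnNhd isOpen_ball).deriv).differentiableOn).continuousOn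
    have contray : ContinuousOn (fun t : ℝ => ((t:ℂ)*z)) (Icc (0:ℝ) 1) :=
      ((Complex.continuous_ofReal.mul continuous_const)).continuousOn
    exact continuous_const.continuousOn.mul (contg.comp contray (fun t ht => mem t ht))
  have hFTCg : g z = ∫ t in (0:ℝ)..1, z * deriv g ((t:ℂ)*z) := by
    have := intervalIntegral.integral_eq_sub_of_hasDerivAt (a := (0:ℝ)) (b := (1:ℝ))
      (f := fun s : ℝ => g ((s:ℂ) * z))
      (f' := fun t : ℝ => z * deriv g ((t:ℂ)*z)) ?_ ?_
    · rw [this]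
      norm_num [g0]
    · intro t ht
      rw [uIcc_of_le zero_le_one] at ht
      exact γderiv t ht
    · apply ContinuousOn.intervalIntegrable
      rwa [uIcc_of_le zero_le_one]
  -- the antiderivative G
  set E : ℝ → ℝ := fun t =>
    r * (((α + t*r) / (1 + α * (t*r))) * ((1 + t*r) / (1 - t*r)^3)) with hE
  set G : ℝ → ℝ := fun t =>
    β^2 * (Real.log (1 + α*(t*r)) - Real.log (1 - t*r))
      + t*r/(1-t*r)^2 - β*(2*(t*r)/(1-t*r)) with hG
  have Gderiv : ∀ t ∈ Icc (0:ℝ) 1, HasDerivAt G (E t) t := by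
    intro t ht
    have h1tr := hden1 t ht
    have h2tr := hden2 t ht
    have d1 : HasDerivAt (fun t : ℝ => 1 + α*(t*r)) (α*r) t := by
      simpa [mul_assoc] using (((hasDerivAt_id t).mul_const r).const_mul α).const_add 1
    have d2 : HasDerivAt (fun t : ℝ => 1 - t*r) (-r) t := by
      simpa using ((hasDerivAt_id t).mul_const r).const_sub 1
    have dlog1 : HasDerivAt (fun t : ℝ => Real.log (1 + α*(t*r))) (α*r/(1 + α*(t*r))) t :=
      d1.log (ne_of_gt h2tr)
    have dlog2 : HasDerivAt (fun t : ℝ => Real.log (1 - t*r)) ((-r)/(1 - t*r)) t :=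
      d2.log (ne_of_gt h1tr)
    have dnum : HasDerivAt (fun t : ℝ => t*r) r t := by
      simpa using (hasDerivAt_id t).mul_const r
    have dden2 : HasDerivAt (fun t : ℝ => (1 - t*r)^2) (2*(1 - t*r)^1*(-r)) t := d2.pow 2
    have dfrac : HasDerivAt (fun t : ℝ => t*r/(1-t*r)^2)
        ((r * (1-t*r)^2 - (t*r) * (2*(1 - t*r)^1*(-r)))/((1-t*r)^2)^2) t :=
      dnum.div dden2 (by positivity)
    have dfrac2 : HasDerivAt (fun t : ℝ => 2*(t*r)/(1-t*r))
        ((2*r * (1-t*r) - 2*(t*r) * (-r))/((1-t*r))^2) t := by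
      have h2' : HasDerivAt (fun t : ℝ => 2*(t*r)) (2*r) t := by
        simpa [mul_assoc] using dnum.const_mul 2
      exact h2'.div d2 (ne_of_gt h1tr)
    have hsum := (((dlog1.sub dlog2).const_mul (β^2)).add dfrac).sub (dfrac2.const_mul β)
    refine hsum.congr_deriv ?_
    rw [hE, hβ]
    have hα1'' : (1:ℝ) + α ≠ 0 := ne_of_gt hα1'
    have h3 : (1:ℝ) + α*r*t ≠ 0 := by linarith [mul_comm t r, mul_assoc α r t, mul_assoc α t r]
    have h4 : (1:ℝ) - r*t ≠ 0 := by linarith [mul_comm t r]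
    field_simp
    ring
  have Econt : ContinuousOn E (Icc (0:ℝ) 1) := by
    rw [hE]
    apply ContinuousOn.mul continuousOn_const
    apply ContinuousOn.mul
    · exact ContinuousOn.div (by fun_prop) (by fun_prop)
        (fun t ht => ne_of_gt (hden2 t ht))
    · exact ContinuousOn.div (by fun_prop) (by fun_prop)
        (fun t ht => ne_of_gt (pow_pos (hden1 t ht) 3))
  have Eint : IntervalIntegrable E MeasureTheory.volume 0 1 := by
    apply ContinuousOn.intervalIntegrable
    rwa [uIcc_of_le zero_le_one]
  have EFTC : ∫ t in (0:ℝ)..1, E t = G 1 - G 0 := by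
    apply intervalIntegral.integral_eq_sub_of_hasDerivAt
    · intro t ht
      rw [uIcc_of_le zero_le_one] at ht
      exact Gderiv t ht
    · exact Eint
  have bound : ∀ t ∈ Set.uIoc (0:ℝ) 1, ‖z * deriv g ((t:ℂ)*z)‖ ≤ E t := by
    intro t ht
    rw [uIoc_of_le zero_le_one] at ht
    have htI : t ∈ Icc (0:ℝ) 1 := ⟨ht.1.le, ht.2⟩
    have hgb := gbound ((t:ℂ)*z) (mem t htI)
    rw [habs t htI] at hgb
    rw [norm_mul, ← hr, hE]
    exact mul_le_mul_of_nonneg_left hgb hr0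
  have Enn : (0:ℝ) ≤ ∫ t in (0:ℝ)..1, E t := by
    apply intervalIntegral.integral_nonneg zero_le_one
    intro t ht
    rw [hE]
    apply mul_nonneg hr0
    apply mul_nonneg
    · apply div_nonneg _ (hden2 t ht).le
      have := mul_nonneg ht.1 hr0
      linarith
    · apply div_nonneg _ (pow_pos (hden1 t ht) 3).le
      have := mul_nonneg ht.1 hr0
      linarith
  have key : ‖g z‖ ≤ ∫ t in (0:ℝ)..1, E t := by
    have h1' := intervalIntegral.norm_integral_le_of_norm_le
      (f := fun t : ℝ => z * deriv g ((t:ℂ)*z)) (μ := MeasureTheory.volume) zero_le_one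
      (Filter.Eventually.of_forall (fun t ht => bound t (by rwa [uIoc_of_le zero_le_one]))) Eint
    calc ‖g z‖ = ‖g z‖ := rfl
      _ = ‖∫ t in (0:ℝ)..1, z * deriv g ((t:ℂ)*z)‖ := by rw [← hFTCg]
      _ ≤ ∫ t in (0:ℝ)..1, E t := h1'
  have hG0 : G 0 = 0 := by
    rw [hG]
    norm_num
  have hG1 : G 1 = β^2 * (Real.log (1 + α*r) - Real.log (1 - r)) + r/(1-r)^2 - β*(2*r/(1-r)) := by
    rw [hG]
    norm_num
  have hlogdiv : Real.log ((1 + α * r) / (1 - r)) = Real.log (1 + α*r) - Real.log (1 - r) := by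
    apply Real.log_div
    · have : (0:ℝ) < 1 + α*r := by nlinarith [mul_nonneg hα0 hr0]
      linarith
    · linarith
  calc ‖g z‖ ≤ ∫ t in (0:ℝ)..1, E t := key
    _ = G 1 - G 0 := EFTC
    _ = β^2 * (Real.log (1 + α*r) - Real.log (1 - r)) + r/(1-r)^2 - β*(2*r/(1-r)) := by
        rw [hG0, hG1, sub_zero]
    _ = β ^ 2 * Real.log ((1 + α * r) / (1 - r)) + 1 * r / (1 - r) ^ 2 - β * (2 * r / (1 - r)) := by
        rw [hlogdiv]
        ring
end

section
/- For all α ∈ [0,1) and r ∈ [0,1): ((1-α)/(1+α))² · log((1 + αr)/(1 - r)) + r/(1 - r)² - ((1-α)/(1+α)) · 2r/(1 - r) ≤ r(α + r) / ((1 + αr)(1 - r)²). -/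
open Metric Set

theorem stmt14 (α r : ℝ) (hα : α ∈ Set.Ico (0:ℝ) 1) (hr : r ∈ Set.Ico (0:ℝ) 1) :
    ((1 - α) / (1 + α)) ^ 2 * Real.log ((1 + α * r) / (1 - r)) + r / (1 - r) ^ 2
        - ((1 - α) / (1 + α)) * (2 * r / (1 - r))
      ≤ r * (α + r) / ((1 + α * r) * (1 - r) ^ 2) := by
  obtain ⟨hα0, hα1⟩ := hα
  obtain ⟨hr0, hr1⟩ := hr
  have h1r : (0:ℝ) < 1 - r := by linarith
  have h1αr : (0:ℝ) < 1 + α * r := by nlinarith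
  have h1α : (0:ℝ) < 1 + α := by linarith
  have hlog : Real.log ((1 + α * r) / (1 - r)) ≤ α * r + r / (1 - r) := by
    rw [Real.log_div (by positivity) (by positivity)]
    have h1 : Real.log (1 + α * r) ≤ α * r := by
      have := Real.log_le_sub_one_of_pos h1αr
      linarith
    have h2 : -Real.log (1 - r) ≤ r / (1 - r) := by
      have h3 : Real.log (1 - r)⁻¹ ≤ (1 - r)⁻¹ - 1 :=
        Real.log_le_sub_one_of_pos (by positivity)
      rw [Real.log_inv] at h3
      have : (1 - r)⁻¹ - 1 = r / (1 - r) := by field_simp; ring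
      linarith
    linarith
  have hk2 : (0:ℝ) ≤ ((1 - α) / (1 + α)) ^ 2 := sq_nonneg _
  have hstep : ((1 - α) / (1 + α)) ^ 2 * Real.log ((1 + α * r) / (1 - r))
      ≤ ((1 - α) / (1 + α)) ^ 2 * (α * r + r / (1 - r)) :=
    mul_le_mul_of_nonneg_left hlog hk2
  have hD : r * (α + r) / ((1 + α * r) * (1 - r) ^ 2)
      - (((1 - α) / (1 + α)) ^ 2 * (α * r + r / (1 - r)) + r / (1 - r) ^ 2
        - ((1 - α) / (1 + α)) * (2 * r / (1 - r)))
      = α * r ^ 2 * (1 - α) * (2 * (1 + α) - α * (1 - α) * (1 - r))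
        / ((1 - r) * (1 + α) ^ 2 * (1 + α * r)) := by
    field_simp
    ring
  have hnum : 0 ≤ α * r ^ 2 * (1 - α) * (2 * (1 + α) - α * (1 - α) * (1 - r)) := by
    have h1 : 0 ≤ 2 * (1 + α) - α * (1 - α) * (1 - r) := by nlinarith
    have h2 : 0 ≤ 1 - α := by linarith
    positivity
  have hden : (0:ℝ) < (1 - r) * (1 + α) ^ 2 * (1 + α * r) := by positivity
  have hquot := div_nonneg hnum hden.le
  linarith [hD ▸ hquot]
end

section
/- Let f = h + conj(g) ∈ Ľ_H^α. Then for all z ∈ Δ, |f(z)| = |h(z) + conj(g(z))| ≥ (1 - α)|z|(1 - |z|) / ((1 + α|z|)(1 + |z|)²). -/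
open Metric Set

noncomputable section

namespace Stmt17Aux

lemma normSq_moebius (a v : ℂ) :
    Complex.normSq (1 - (starRingEnd ℂ) a * v) - Complex.normSq (a - v)
      = (1 - Complex.normSq a) * (1 - Complex.normSq v) := by
  simp only [Complex.normSq_apply, Complex.sub_re, Complex.sub_im, Complex.one_re, Complex.one_im,
    Complex.mul_re, Complex.mul_im, Complex.conj_re, Complex.conj_im]
  ring

lemma normSq_add_sub_one (p : ℂ) :
    Complex.normSq (p + 1) - Complex.normSq (p - 1) = 4 * p.re := by
  simp only [Complex.normSq_apply, Complex.add_re, Complex.add_im, Complex.sub_re, Complex.sub_im,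
    Complex.one_re, Complex.one_im]
  ring

lemma re_one_add_div_one_sub {x : ℂ} (hx : (1:ℂ) - x ≠ 0) :
    ((1 + x) / (1 - x)).re = (1 - Complex.normSq x) / Complex.normSq (1 - x) := by
  rw [Complex.div_re, ← add_div]
  congr 1
  simp only [Complex.normSq_apply, Complex.add_re, Complex.add_im, Complex.sub_re, Complex.sub_im,
    Complex.one_re, Complex.one_im]
  ring

lemma hasDerivAt_log_abs {u : ℝ → ℂ} {u' : ℂ} {t : ℝ} (hu : HasDerivAt u u' t)
    (hne : u t ≠ 0) :
    HasDerivAt (fun s => Real.log (‖u s‖)) ((u' / u t).re) t := by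
  have hre : HasDerivAt (fun s => (u s).re) u'.re t :=
    Complex.reCLM.hasFDerivAt.comp_hasDerivAt t hu
  have him : HasDerivAt (fun s => (u s).im) u'.im t :=
    Complex.imCLM.hasFDerivAt.comp_hasDerivAt t hu
  have hN : HasDerivAt (fun s => Complex.normSq (u s))
      (u'.re * (u t).re + (u t).re * u'.re + (u'.im * (u t).im + (u t).im * u'.im)) t := by
    have := (hre.mul hre).add (him.mul him)
    simpa only [Complex.normSq_apply, Pi.mul_def, Pi.add_def] using this
  have hN0 : Complex.normSq (u t) ≠ 0 := by
    simpa [Complex.normSq_eq_zero] using hne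
  have hlog : HasDerivAt (fun s => Real.log (Complex.normSq (u s)) / 2)
      (((Complex.normSq (u t))⁻¹ *
        (u'.re * (u t).re + (u t).re * u'.re + (u'.im * (u t).im + (u t).im * u'.im))) / 2) t :=
    by have hl := Real.hasDerivAt_log hN0; exact (hl.comp t hN).div_const 2
  have heq : (fun s => Real.log (Complex.normSq (u s)) / 2)
      = fun s => Real.log (‖u s‖) := by
    funext s
    rw [Complex.norm_def, Real.log_sqrt (Complex.normSq_nonneg _)]
  rw [heq] at hlog
  convert hlog using 1
  rw [Complex.div_re]
  field_simp
  ring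

lemma div_ofReal_re (v : ℂ) {t : ℝ} (ht : t ≠ 0) : (v / (t:ℂ)).re = v.re / t := by
  rw [Complex.div_re]
  simp only [Complex.ofReal_re, Complex.ofReal_im, Complex.normSq_ofReal, mul_zero, zero_div,
    add_zero]
  field_simp

lemma schwarz_le {f : ℂ → ℂ} (hf : DifferentiableOn ℂ f (ball (0:ℂ) 1))
    (hb : ∀ z ∈ ball (0:ℂ) 1, ‖f z‖ ≤ 1) (h0 : f 0 = 0)
    {z : ℂ} (hz : z ∈ ball (0:ℂ) 1) : ‖f z‖ ≤ ‖z‖ := by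
  have hz1 : ‖z‖ < 1 := mem_ball_zero_iff.1 hz
  refine le_of_forall_pos_le_add fun ε hε => ?_
  have hR : (1:ℝ) < 1 + ε := by linarith
  have maps : MapsTo f (ball (0:ℂ) 1) (ball (f 0) (1 + ε)) := by
    intro x hx
    rw [h0, mem_ball_zero_iff]
    exact lt_of_le_of_lt (hb x hx) hR
  have key := Complex.dist_le_div_mul_dist_of_mapsTo_ball hf (maps.mono_right ball_subset_closedBall) hz
  rw [h0, dist_zero_right, dist_zero_right, div_one] at key
  have : (1 + ε) * ‖z‖ ≤ ‖z‖ + ε := by nlinarith [norm_nonneg z]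
  calc ‖f z‖ ≤ (1 + ε) * ‖z‖ := by simpa using key
    _ ≤ ‖z‖ + ε := this

end Stmt17Aux

end

open Stmt17Aux

set_option maxHeartbeats 2000000 in
theorem stmt17
    (h g : ℂ → ℂ) (α : ℝ) (hα : α ∈ Set.Ico (0:ℝ) 1)
    (hd : DifferentiableOn ℂ h (Metric.ball (0:ℂ) 1))
    (gd : DifferentiableOn ℂ g (Metric.ball (0:ℂ) 1))
    (h0 : h 0 = 0) (h1 : deriv h 0 = 1) (g0 : g 0 = 0)
    (hb1 : ‖deriv g 0‖ = α)
    (hsp : ∀ z ∈ Metric.ball (0:ℂ) 1, ‖deriv g z‖ < ‖deriv h z‖)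
    (hinj : Set.InjOn h (Metric.ball (0:ℂ) 1))
    (hstar : ∀ w ∈ h '' (Metric.ball (0:ℂ) 1), segment ℝ 0 w ⊆ h '' (Metric.ball (0:ℂ) 1))
 :
    ∀ z ∈ Metric.ball (0:ℂ) 1,
      (1 - α) * ‖z‖ * (1 - ‖z‖) / ((1 + α * ‖z‖) * (1 + ‖z‖) ^ 2)
        ≤ ‖h z + (starRingEnd ℂ) (g z)‖ := by
  obtain ⟨hα0, hα1⟩ := hα
  have h0B : (0:ℂ) ∈ ball (0:ℂ) 1 := by simp
  have hzne : ∀ z ∈ ball (0:ℂ) 1, z ≠ 0 → h z ≠ 0 := by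
    intro z hz hz0 hcon
    exact hz0 (hinj hz h0B (by rw [hcon, h0]))
  -- the analytic quotient φ = g/h (with removable singularity at 0)
  have mem0 : ball (0:ℂ) 1 ∈ nhds (0:ℂ) := isOpen_ball.mem_nhds h0B
  set dh : ℂ → ℂ := dslope h 0 with hdhdef
  set dg : ℂ → ℂ := dslope g 0 with hdgdef
  have dslope_diff : ∀ f : ℂ → ℂ, DifferentiableOn ℂ f (ball (0:ℂ) 1) →
      DifferentiableOn ℂ (dslope f 0) (ball (0:ℂ) 1) := by
    intro f hf x hx
    rcases eq_or_ne x 0 with rfl | hx0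
    · obtain ⟨p, hp⟩ := hf.analyticAt mem0
      exact hp.has_fpower_series_dslope_fslope.analyticAt.differentiableAt.differentiableWithinAt
    · exact (differentiableWithinAt_dslope_of_ne hx0).mpr (hf x hx)
  have dhd : DifferentiableOn ℂ dh (ball (0:ℂ) 1) := dslope_diff h hd
  have dgd : DifferentiableOn ℂ dg (ball (0:ℂ) 1) := dslope_diff g gd
  have dh0 : dh 0 = 1 := by rw [hdhdef, dslope_same, h1]
  have dg0 : dg 0 = deriv g 0 := by rw [hdgdef, dslope_same]
  have dhz : ∀ x : ℂ, x ≠ 0 → dh x = h x / x := by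
    intro x hx0
    rw [hdhdef, dslope_of_ne _ hx0, slope_def_field, h0, sub_zero, sub_zero]
  have dgz : ∀ x : ℂ, x ≠ 0 → dg x = g x / x := by
    intro x hx0
    rw [hdgdef, dslope_of_ne _ hx0, slope_def_field, g0, sub_zero, sub_zero]
  have dhne : ∀ x ∈ ball (0:ℂ) 1, dh x ≠ 0 := by
    intro x hx
    rcases eq_or_ne x 0 with rfl | hx0
    · rw [dh0]; exact one_ne_zero
    · rw [dhz x hx0]; exact div_ne_zero (hzne x hx hx0) hx0
  set φ : ℂ → ℂ := fun x => dg x / dh x with hφdef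
  have φd : DifferentiableOn ℂ φ (ball (0:ℂ) 1) := dgd.div dhd dhne
  have φ0 : φ 0 = deriv g 0 := by rw [hφdef]; simp only; rw [dg0, dh0, div_one]
  have φval : ∀ x, x ≠ 0 → φ x = g x / h x := by
    intro x hx0
    rw [hφdef]; simp only
    rw [dgz x hx0, dhz x hx0, div_div_div_comm, div_self hx0, div_one]
  -- |g| ≤ |h| on the ball (uses starlikeness)
  -- inverse function machinery
  have strict : ∀ z ∈ ball (0:ℂ) 1, HasStrictDerivAt h (deriv h z) z := by
    intro z hz
    obtain ⟨p, hp⟩ := hd.analyticAt (isOpen_ball.mem_nhds hz)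
    have hs := hp.hasStrictDerivAt
    rwa [← hs.hasDerivAt.deriv] at hs
  have hne' : ∀ z ∈ ball (0:ℂ) 1, deriv h z ≠ 0 := by
    intro z hz hzero
    have := hsp z hz
    rw [hzero, norm_zero] at this
    exact (norm_nonneg _).not_gt this
  set U : Set ℂ := h '' ball (0:ℂ) 1 with hUdef
  set H : ℂ → ℂ := Function.invFunOn h (ball (0:ℂ) 1) with hHdef
  have hex : ∀ w ∈ U, ∃ x ∈ ball (0:ℂ) 1, h x = w := by
    rintro w ⟨x, hx, rfl⟩; exact ⟨x, hx, rfl⟩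
  have HmemU : ∀ w ∈ U, H w ∈ ball (0:ℂ) 1 := fun w hw =>
    Function.invFunOn_mem (hex w hw)
  have hHw : ∀ w ∈ U, h (H w) = w := fun w hw => Function.invFunOn_eq (hex w hw)
  have hHh : ∀ z ∈ ball (0:ℂ) 1, H (h z) = z := fun z hz => hinj.leftInvOn_invFunOn hz
  have H0 : H 0 = 0 := by have := hHh 0 h0B; rwa [h0] at this
  have hUopen : IsOpen U := by
    rw [isOpen_iff_mem_nhds]
    rintro w ⟨z, hz, rfl⟩
    rw [← (strict z hz).map_nhds_eq (hne' z hz)]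
    exact Filter.image_mem_map (isOpen_ball.mem_nhds hz)
  have Hderiv : ∀ w ∈ U, HasDerivAt H (deriv h (H w))⁻¹ w := by
    intro w hw
    have hzB : H w ∈ ball (0:ℂ) 1 := HmemU w hw
    have hst := (strict _ hzB).to_local_left_inverse (hne' _ hzB)
      (Filter.eventually_of_mem (isOpen_ball.mem_nhds hzB) fun x hx => hHh x hx)
    rw [hHw w hw] at hst
    exact hst.hasDerivAt
  have starU : ∀ w ∈ U, ∀ t : ℝ, 0 ≤ t → t ≤ 1 → (t : ℂ) * w ∈ U := by
    intro w hw t ht0 ht1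
    apply hstar w hw
    rw [segment_eq_image]
    exact ⟨t, ⟨ht0, ht1⟩, by simp [Complex.real_smul]⟩
  have key1 : ∀ z ∈ ball (0:ℂ) 1, ‖g z‖ ≤ ‖h z‖ := by
    intro z hz
    have hseg : segment ℝ 0 (h z) ⊆ U := hstar (h z) ⟨z, hz, rfl⟩
    have hder : ∀ x ∈ segment ℝ 0 (h z),
        HasFDerivWithinAt (fun w => g (H w))
          (ContinuousLinearMap.smulRight (1 : ℂ →L[ℂ] ℂ) (deriv g (H x) * (deriv h (H x))⁻¹))
          (segment ℝ 0 (h z)) x := by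
      intro x hx
      have hxU : x ∈ U := hseg hx
      have hHx : H x ∈ ball (0:ℂ) 1 := HmemU x hxU
      have hgd : HasDerivAt g (deriv g (H x)) (H x) :=
        (gd.differentiableAt (isOpen_ball.mem_nhds hHx)).hasDerivAt
      exact ((hgd.comp x (Hderiv x hxU)).hasFDerivAt).hasFDerivWithinAt
    have hbound : ∀ x ∈ segment ℝ 0 (h z),
        ‖ContinuousLinearMap.smulRight (1 : ℂ →L[ℂ] ℂ) (deriv g (H x) * (deriv h (H x))⁻¹)‖ ≤ 1 := by
      intro x hx
      have hxU : x ∈ U := hseg hx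
      have hHx : H x ∈ ball (0:ℂ) 1 := HmemU x hxU
      have h2 := hsp (H x) hHx
      have h3 : ‖deriv h (H x)‖ ≠ 0 := by
        intro hcon
        rw [hcon] at h2
        exact (norm_nonneg _).not_gt h2
      calc ‖ContinuousLinearMap.smulRight (1 : ℂ →L[ℂ] ℂ) (deriv g (H x) * (deriv h (H x))⁻¹)‖
          = ‖deriv g (H x) * (deriv h (H x))⁻¹‖ := by
            rw [ContinuousLinearMap.norm_smulRight_apply, norm_one, one_mul]
        _ = ‖deriv g (H x)‖ / ‖deriv h (H x)‖ := by
            rw [norm_mul, norm_inv, div_eq_mul_inv]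
        _ ≤ 1 := div_le_one_of_le₀ h2.le (norm_nonneg _)
    have hcvx : Convex ℝ (segment ℝ 0 (h z)) := convex_segment _ _
    have := hcvx.norm_image_sub_le_of_norm_hasFDerivWithin_le hder hbound
      (left_mem_segment ℝ 0 (h z)) (right_mem_segment ℝ 0 (h z))
    rw [hHh z hz, H0, g0, one_mul, sub_zero, sub_zero] at this
    simpa using this
  have φle1 : ∀ x ∈ ball (0:ℂ) 1, ‖φ x‖ ≤ 1 := by
    intro x hx
    rcases eq_or_ne x 0 with rfl | hx0
    · rw [φ0, hb1]; exact hα1.le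
    · rw [φval x hx0, norm_div]
      exact div_le_one_of_le₀ (key1 x hx) (norm_nonneg _)
  -- Schwarz–Pick bound on φ
  have key2 : ∀ x ∈ ball (0:ℂ) 1,
      ‖φ x‖ ≤ (α + ‖x‖) / (1 + α * ‖x‖) := by
    set a : ℂ := deriv g 0 with hadef
    have hnsa : Complex.normSq a = α^2 := by rw [← Complex.sq_norm, hb1]
    have den_ne : ∀ y ∈ ball (0:ℂ) 1, (1:ℂ) - (starRingEnd ℂ) a * φ y ≠ 0 := by
      intro y hy hcon
      rw [sub_eq_zero] at hcon
      have habs := congrArg norm hcon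
      rw [norm_one, norm_mul, Complex.norm_conj, hb1] at habs
      have h1 : α * ‖φ y‖ ≤ α * 1 :=
        mul_le_mul_of_nonneg_left (φle1 y hy) hα0
      rw [← habs] at h1
      rw [mul_one] at h1
      linarith
    set ψ : ℂ → ℂ := fun y => (a - φ y) / (1 - (starRingEnd ℂ) a * φ y) with hψdef
    have ψd : DifferentiableOn ℂ ψ (ball (0:ℂ) 1) :=
      ((differentiableOn_const a).sub φd).div
        ((differentiableOn_const 1).sub ((differentiableOn_const _).mul φd)) den_ne
    have ψ0 : ψ 0 = 0 := by
      rw [hψdef]; simp only; rw [φ0, sub_self, zero_div]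
    have ψle1 : ∀ y ∈ ball (0:ℂ) 1, ‖ψ y‖ ≤ 1 := by
      intro y hy
      rw [hψdef]; simp only [norm_div]
      apply div_le_one_of_le₀ _ (norm_nonneg _)
      have hid := normSq_moebius a (φ y)
      have h2 : Complex.normSq (φ y) ≤ 1 := by
        rw [← Complex.sq_norm]
        nlinarith [φle1 y hy, norm_nonneg (φ y)]
      have h3 : 0 ≤ (1 - Complex.normSq a) * (1 - Complex.normSq (φ y)) := by
        apply mul_nonneg <;> nlinarith
      have h4 : Complex.normSq (a - φ y) ≤ Complex.normSq (1 - (starRingEnd ℂ) a * φ y) := by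
        linarith
      rw [Complex.norm_def, Complex.norm_def]
      exact Real.sqrt_le_sqrt h4
    intro x hx
    set r := ‖x‖ with hrdef
    have hr0 : 0 ≤ r := norm_nonneg x
    have hr1 : r < 1 := mem_ball_zero_iff.1 hx
    have ψS : ‖ψ x‖ ≤ r := schwarz_le ψd ψle1 ψ0 hx
    set m : ℂ := ψ x with hmdef
    have hden := den_ne x hx
    have e1 : (1 - (starRingEnd ℂ) a * m) * (1 - (starRingEnd ℂ) a * φ x)
        = 1 - (starRingEnd ℂ) a * a := by
      rw [hmdef, hψdef]; simp only
      field_simp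
      ring
    have h5 : (1:ℂ) - (starRingEnd ℂ) a * a ≠ 0 := by
      intro hcon
      rw [sub_eq_zero] at hcon
      have habs := congrArg norm hcon
      rw [norm_one, norm_mul, Complex.norm_conj, hb1] at habs
      nlinarith
    have hd2 : (1:ℂ) - (starRingEnd ℂ) a * m ≠ 0 := by
      intro hcon
      rw [hcon, zero_mul] at e1
      exact h5 e1.symm
    have hinv : φ x = (a - m) / (1 - (starRingEnd ℂ) a * m) := by
      rw [eq_div_iff hd2]
      have e2 : φ x * (1 - (starRingEnd ℂ) a * m) * (1 - (starRingEnd ℂ) a * φ x)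
          = (a - m) * (1 - (starRingEnd ℂ) a * φ x) := by
        rw [hmdef, hψdef]; simp only
        have hq : (a - φ x) / (1 - (starRingEnd ℂ) a * φ x) * (1 - (starRingEnd ℂ) a * φ x)
            = a - φ x := div_mul_cancel₀ _ hden
        linear_combination (1 - (starRingEnd ℂ) a * φ x) * hq
      exact mul_right_cancel₀ hden e2
    -- now the quantitative bound
    have hDpos : 0 < Complex.normSq (1 - (starRingEnd ℂ) a * m) := Complex.normSq_pos.2 hd2
    have hm1 : ‖m‖ ≤ r := ψS
    have hm0 : 0 ≤ ‖m‖ := norm_nonneg m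
    have hDle : Complex.normSq (1 - (starRingEnd ℂ) a * m) ≤ (1 + α * r)^2 := by
      have habs : ‖1 - (starRingEnd ℂ) a * m‖ ≤ 1 + α * r := by
        calc ‖1 - (starRingEnd ℂ) a * m‖
            ≤ ‖(1:ℂ)‖ + ‖(starRingEnd ℂ) a * m‖ := by
              simpa using norm_sub_le (1:ℂ) ((starRingEnd ℂ) a * m)
          _ = 1 + α * ‖m‖ := by rw [norm_one, norm_mul, Complex.norm_conj, hb1]
          _ ≤ 1 + α * r := by nlinarith
      rw [← Complex.sq_norm]
      nlinarith [norm_nonneg (1 - (starRingEnd ℂ) a * m)]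
    have hid := normSq_moebius a m
    have hnsm : Complex.normSq m ≤ r^2 := by
      rw [← Complex.sq_norm]; nlinarith
    have hnsm0 : 0 ≤ Complex.normSq m := Complex.normSq_nonneg m
    have hq0 : 0 ≤ (α + r) / (1 + α * r) := by
      apply div_nonneg (by linarith) (by nlinarith)
    rw [hinv, norm_div]
    rw [div_le_div_iff₀ (norm_pos_iff.2 hd2) (by nlinarith : (0:ℝ) < 1 + α * r)]
    have hmul : Complex.normSq (1 - (starRingEnd ℂ) a * m) * (1 - r^2)
        ≤ (1 + α * r)^2 * (1 - Complex.normSq m) :=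
      mul_le_mul hDle (by nlinarith : 1 - r^2 ≤ 1 - Complex.normSq m)
        (by nlinarith : (0:ℝ) ≤ 1 - r^2) (by nlinarith : (0:ℝ) ≤ (1 + α * r)^2)
    have hmul2 := mul_le_mul_of_nonneg_left hmul (show (0:ℝ) ≤ 1 - α^2 by nlinarith)
    have hsq : (‖a - m‖ * (1 + α * r))^2
        ≤ ((α + r) * ‖1 - (starRingEnd ℂ) a * m‖)^2 := by
      rw [mul_pow, mul_pow, Complex.sq_norm, Complex.sq_norm]
      have hX2 : Complex.normSq (a - m) = Complex.normSq (1 - (starRingEnd ℂ) a * m)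
          - (1 - α^2) * (1 - Complex.normSq m) := by
        rw [← hnsa]; linarith [hid]
      rw [hX2]
      nlinarith [hmul2]
    have hl0 : 0 ≤ ‖a - m‖ * (1 + α * r) :=
      mul_nonneg (norm_nonneg _) (by nlinarith)
    have hr0' : 0 ≤ (α + r) * ‖1 - (starRingEnd ℂ) a * m‖ :=
      mul_nonneg (by linarith) (norm_nonneg _)
    have := Real.sqrt_le_sqrt hsq
    rwa [Real.sqrt_sq hl0, Real.sqrt_sq hr0'] at this
  -- growth theorem for starlike h
  have key5 : ∀ z ∈ ball (0:ℂ) 1, z ≠ 0 →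
      ‖z‖ / (1 + ‖z‖)^2 ≤ ‖h z‖ := by
    set p : ℂ → ℂ := fun x => deriv h x / dh x with hpdef
    have p0 : p 0 = 1 := by rw [hpdef]; simp only; rw [h1, dh0, div_one]
    have pd : DifferentiableOn ℂ p (ball (0:ℂ) 1) :=
      ((hd.analyticOnNhd isOpen_ball).deriv.differentiableOn).div dhd dhne
    -- Re p ≥ 0 via starlikeness
    have pRe : ∀ x ∈ ball (0:ℂ) 1, 0 ≤ (p x).re := by
      intro x hx
      rcases eq_or_ne x 0 with rfl | hx0
      · rw [p0]; norm_num
      · set w := h x with hwdef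
        have hwU : w ∈ U := ⟨x, hx, rfl⟩
        have hw0 : w ≠ 0 := hzne x hx hx0
        have hHwx : H w = x := by rw [hwdef]; exact hHh x hx
        have hcont : Continuous fun t : ℝ => (t:ℂ) * w :=
          Complex.continuous_ofReal.mul continuous_const
        have hVopen : IsOpen {t : ℝ | (t:ℂ) * w ∈ U} := hUopen.preimage hcont
        have h1V : (1:ℝ) ∈ {t : ℝ | (t:ℂ) * w ∈ U} := by
          simp only [mem_setOf_eq, Complex.ofReal_one, one_mul]; exact hwU
        obtain ⟨ε, hε0, hεsub⟩ := Metric.isOpen_iff.1 hVopen 1 h1V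
        have mono : ∀ s t : ℝ, 0 < s → s ≤ t → (t:ℂ) * w ∈ U →
            ‖H ((s:ℂ) * w)‖ ≤ ‖H ((t:ℂ) * w)‖ := by
          intro s t hs0 hst htU
          have ht0 : 0 < t := lt_of_lt_of_le hs0 hst
          set ζ := H ((t:ℂ) * w) with hζdef
          have hζB : ζ ∈ ball (0:ℂ) 1 := HmemU _ htU
          set c : ℝ := s / t with hcdef
          have hc0 : 0 ≤ c := by positivity
          have hc1 : c ≤ 1 := div_le_one_of_le₀ hst ht0.le
          have hmapsU : ∀ y ∈ ball (0:ℂ) 1, (c:ℂ) * h y ∈ U := fun y hy =>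
            starU (h y) ⟨y, hy, rfl⟩ c hc0 hc1
          set χ : ℂ → ℂ := fun y => H ((c:ℂ) * h y) with hχdef
          have hχd : DifferentiableOn ℂ χ (ball (0:ℂ) 1) := by
            intro y hy
            have h2 : HasDerivAt (fun u : ℂ => (c:ℂ) * h u) ((c:ℂ) * deriv h y) y :=
              ((hd.differentiableAt (isOpen_ball.mem_nhds hy)).hasDerivAt).const_mul _
            have h3 : HasDerivAt H (deriv h (H ((c:ℂ) * h y)))⁻¹ ((fun u : ℂ => (c:ℂ) * h u) y) :=
              Hderiv _ (hmapsU y hy)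
            exact ((h3.comp y h2).differentiableAt).differentiableWithinAt
          have hχmaps : MapsTo χ (ball (0:ℂ) 1) (ball (0:ℂ) 1) := fun y hy =>
            HmemU _ (hmapsU y hy)
          have hχ0 : χ 0 = 0 := by rw [hχdef]; simp only; rw [h0, mul_zero, H0]
          have hS := Complex.norm_le_norm_of_mapsTo_ball_self hχd (hχmaps.mono_right ball_subset_closedBall) hχ0
            (mem_ball_zero_iff.1 hζB)
          have hct : c * t = s := div_mul_cancel₀ s ht0.ne'
          have hχζ : χ ζ = H ((s:ℂ) * w) := by
            rw [hχdef]; simp only; rw [hζdef, hHw _ htU, ← mul_assoc, ← Complex.ofReal_mul, hct]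
          rw [hχζ] at hS
          exact hS
        set γ : ℝ → ℂ := fun t => H ((t:ℂ) * w) with hγdef
        have hγ1 : γ 1 = x := by
          rw [hγdef]; simp only; rw [Complex.ofReal_one, one_mul, hHwx]
        have hγd : HasDerivAt γ ((deriv h (H w))⁻¹ * w) 1 := by
          have hone : ((1:ℝ):ℂ) * w = w := by norm_num
          have h1w : ((1:ℝ):ℂ) * w ∈ U := by rw [hone]; exact hwU
          have inner : HasDerivAt (fun u : ℂ => u * w) w ((1:ℝ):ℂ) := hasDerivAt_mul_const w
          have outer : HasDerivAt H (deriv h (H (((1:ℝ):ℂ) * w)))⁻¹ (((1:ℝ):ℂ) * w) :=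
            Hderiv _ h1w
          have hc : HasDerivAt (H ∘ fun u : ℂ => u * w)
              ((deriv h (H (((1:ℝ):ℂ) * w)))⁻¹ * w) ((1:ℝ):ℂ) :=
            HasDerivAt.comp ((1:ℝ):ℂ) (hh := inner) (hh₂ := outer)
          rw [hone] at hc
          have hcr := hc.comp_ofReal
          simpa [Function.comp] using hcr
        have hγ1ne : γ 1 ≠ 0 := by rw [hγ1]; exact hx0
        have hlog := hasDerivAt_log_abs hγd hγ1ne
        have hd0 : 0 ≤ (((deriv h (H w))⁻¹ * w) / γ 1).re := by
          have htend := hasDerivAt_iff_tendsto_slope.1 hlog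
          have htend2 := htend.mono_left
            (nhdsWithin_mono 1 (fun (t : ℝ) (ht : t ∈ Ioi (1:ℝ)) => ne_of_gt ht))
          apply ge_of_tendsto htend2
          filter_upwards [Ioo_mem_nhdsGT_of_mem
            (show (1:ℝ) ∈ Ico (1:ℝ) (1+ε) from ⟨le_refl _, by linarith⟩)] with t ht
          obtain ⟨ht1, htε⟩ := ht
          have htU : (t:ℂ) * w ∈ U := by
            apply hεsub
            rw [Metric.mem_ball, Real.dist_eq, abs_of_nonneg (by linarith)]
            linarith
          have hmle := mono 1 t one_pos ht1.le htU
          rw [slope_def_field]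
          apply div_nonneg _ (by linarith)
          rw [sub_nonneg]
          have hγt0 : ‖γ 1‖ ≠ 0 := by
            simpa using norm_ne_zero_iff.2 hγ1ne
          exact Real.log_le_log (norm_pos_iff.2 hγ1ne) hmle
        rw [hγ1] at hd0
        have hpx : p x ≠ 0 := div_ne_zero (hne' x hx) (dhne x hx)
        have hq : (p x)⁻¹ = (deriv h (H w))⁻¹ * w / x := by
          rw [hpdef]; simp only
          rw [hHwx, dhz x hx0, hwdef]
          field_simp
        rw [← inv_inv (p x), Complex.inv_re]
        apply div_nonneg _ (Complex.normSq_nonneg _)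
        rw [hq]
        exact hd0
    -- Herglotz-type bound
    have key4 : ∀ x ∈ ball (0:ℂ) 1, (1 - ‖x‖)/(1 + ‖x‖) ≤ (p x).re := by
      have pne : ∀ y ∈ ball (0:ℂ) 1, p y + 1 ≠ 0 := by
        intro y hy hcon
        have h2 := congrArg Complex.re hcon
        simp only [Complex.add_re, Complex.one_re, Complex.zero_re] at h2
        linarith [pRe y hy]
      set ω : ℂ → ℂ := fun y => (p y - 1) / (p y + 1) with hωdef
      have ωd : DifferentiableOn ℂ ω (ball (0:ℂ) 1) :=
        (pd.sub (differentiableOn_const 1)).div (pd.add (differentiableOn_const 1)) pne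
      have ω0 : ω 0 = 0 := by rw [hωdef]; simp only; rw [p0]; simp
      have ωle1 : ∀ y ∈ ball (0:ℂ) 1, ‖ω y‖ ≤ 1 := by
        intro y hy
        rw [hωdef]; simp only [norm_div]
        apply div_le_one_of_le₀ _ (norm_nonneg _)
        have h4 := normSq_add_sub_one (p y)
        have h5 : Complex.normSq (p y - 1) ≤ Complex.normSq (p y + 1) := by linarith [pRe y hy]
        rw [Complex.norm_def, Complex.norm_def]
        exact Real.sqrt_le_sqrt h5
      intro x hx
      have hxr : ‖x‖ < 1 := mem_ball_zero_iff.1 hx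
      have hxr0 : 0 ≤ ‖x‖ := norm_nonneg x
      have hωS : ‖ω x‖ ≤ ‖x‖ := schwarz_le ωd ωle1 ω0 hx
      set o : ℂ := ω x with hodef
      have h1o : (1:ℂ) - o ≠ 0 := by
        intro hcon
        rw [sub_eq_zero] at hcon
        have h2 := congrArg norm hcon
        rw [norm_one] at h2
        have h3 := hωS
        rw [← h2] at h3
        linarith
      have hpform : p x = (1 + o) / (1 - o) := by
        rw [hodef, hωdef]; simp only
        field_simp [pne x hx]
        ring
      rw [hpform, re_one_add_div_one_sub h1o]
      have hoabs : ‖o‖ ≤ ‖x‖ := hωS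
      have ho0 : 0 ≤ ‖o‖ := norm_nonneg o
      have hDpos : 0 < Complex.normSq (1 - o) := Complex.normSq_pos.2 h1o
      have hDle : Complex.normSq (1 - o) ≤ (1 + ‖o‖)^2 := by
        have h3 : ‖1 - o‖ ≤ 1 + ‖o‖ := by
          simpa using norm_sub_le (1:ℂ) o
        rw [← Complex.sq_norm]
        nlinarith [norm_nonneg (1 - o)]
      have hnso : Complex.normSq o = (‖o‖)^2 := (Complex.sq_norm o).symm
      rw [div_le_div_iff₀ (by nlinarith) hDpos]
      have h6 : (1 - ‖x‖) * Complex.normSq (1 - o)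
          ≤ (1 - ‖x‖) * (1 + ‖o‖)^2 :=
        mul_le_mul_of_nonneg_left hDle (by linarith)
      nlinarith [h6, mul_nonneg (show (0:ℝ) ≤ 1 + ‖o‖ by linarith)
        (show (0:ℝ) ≤ ‖x‖ - ‖o‖ by linarith)]
    -- integrate the differential inequality
    intro z hz hz0
    set r := ‖z‖ with hrdef
    have hr0 : 0 < r := norm_pos_iff.2 hz0
    have hr1 : r < 1 := mem_ball_zero_iff.1 hz
    set F : ℝ → ℝ := fun t => Real.log (‖dh ((t:ℂ) * z)‖) + 2 * Real.log (1 + t * r)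
      with hFdef
    have hmem : ∀ t : ℝ, 0 ≤ t → t ≤ 1 → (t:ℂ) * z ∈ ball (0:ℂ) 1 := by
      intro t ht0 ht1
      rw [mem_ball_zero_iff, norm_mul, Complex.norm_real, Real.norm_eq_abs,
        abs_of_nonneg ht0]
      nlinarith
    have hFc : ContinuousOn F (Icc (0:ℝ) 1) := by
      apply ContinuousOn.add
      · apply ContinuousOn.log
        · apply continuous_norm.comp_continuousOn
          apply dhd.continuousOn.comp
            ((Complex.continuous_ofReal.mul continuous_const).continuousOn)
          intro t ht
          exact hmem t ht.1 ht.2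
        · intro t ht
          exact norm_ne_zero_iff.2 (dhne _ (hmem t ht.1 ht.2))
      · apply ContinuousOn.mul continuousOn_const
        apply ContinuousOn.log
        · exact (continuous_const.add (continuous_id.mul continuous_const)).continuousOn
        · intro t ht
          nlinarith [ht.1]
    have hFd : ∀ t ∈ Ioo (0:ℝ) 1,
        HasDerivAt F ((p ((t:ℂ)*z)).re / t - 1/t + 2 * (r / (1 + t*r))) t := by
      intro t ht
      obtain ⟨ht0, ht1⟩ := ht
      have htz : (t:ℂ) * z ∈ ball (0:ℂ) 1 := hmem t ht0.le ht1.le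
      have htne : ((t:ℝ):ℂ) ≠ 0 := by exact_mod_cast ht0.ne'
      have htzne : (t:ℂ) * z ≠ 0 := mul_ne_zero htne hz0
      have hu : HasDerivAt (fun s : ℝ => h ((s:ℂ) * z)) (deriv h ((t:ℂ)*z) * z) t := by
        have inner : HasDerivAt (fun u : ℂ => u * z) z ((t:ℝ):ℂ) := hasDerivAt_mul_const z
        have outer : HasDerivAt h (deriv h ((t:ℂ)*z)) ((t:ℂ) * z) :=
          (hd.differentiableAt (isOpen_ball.mem_nhds htz)).hasDerivAt
        have hc : HasDerivAt (h ∘ fun u : ℂ => u * z) (deriv h ((t:ℂ)*z) * z) ((t:ℝ):ℂ) :=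
          HasDerivAt.comp ((t:ℝ):ℂ) (hh := inner) (hh₂ := outer)
        simpa [Function.comp] using hc.comp_ofReal
      have hne2 : h ((t:ℂ)*z) ≠ 0 := hzne _ htz htzne
      have hlog1 : HasDerivAt (fun s : ℝ => Real.log (‖h ((s:ℂ) * z)‖))
          ((deriv h ((t:ℂ)*z) * z / h ((t:ℂ)*z)).re) t := hasDerivAt_log_abs hu hne2
      have hlog2 : HasDerivAt Real.log t⁻¹ t := Real.hasDerivAt_log ht0.ne'
      have hden3 : (1:ℝ) + t * r ≠ 0 := by nlinarith
      have hlog3 : HasDerivAt (fun s : ℝ => Real.log (1 + s * r)) (r / (1 + t*r)) t := by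
        have hin : HasDerivAt (fun s : ℝ => 1 + s * r) r t := by
          simpa using ((hasDerivAt_id t).mul_const r).const_add (1:ℝ)
        have h7 := (Real.hasDerivAt_log hden3).comp t hin
        simpa [div_eq_inv_mul, Function.comp_def] using h7
      have hFeq : (fun s : ℝ => Real.log (‖h ((s:ℂ)*z)‖) - Real.log s - Real.log r
            + 2 * Real.log (1 + s*r)) =ᶠ[nhds t] F := by
        filter_upwards [Ioo_mem_nhds ht0 ht1] with s hs
        have hs0 : (0:ℝ) < s := hs.1
        have hsmem : (s:ℂ) * z ∈ ball (0:ℂ) 1 := hmem s hs0.le hs.2.le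
        have hsne : ((s:ℝ):ℂ) ≠ 0 := by exact_mod_cast hs0.ne'
        have hsz : (s:ℂ)*z ≠ 0 := mul_ne_zero hsne hz0
        rw [hFdef]; simp only
        rw [dhz _ hsz, norm_div, norm_mul, Complex.norm_real, Real.norm_eq_abs, abs_of_nonneg hs0.le, ← hrdef,
          Real.log_div (norm_ne_zero_iff.2 (hzne _ hsmem hsz)) (by positivity),
          Real.log_mul hs0.ne' hr0.ne']
        ring
      have hcomb : HasDerivAt (fun s : ℝ => Real.log (‖h ((s:ℂ)*z)‖) - Real.log s
            - Real.log r + 2 * Real.log (1 + s*r))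
          ((deriv h ((t:ℂ)*z) * z / h ((t:ℂ)*z)).re - t⁻¹ - 0 + 2 * (r/(1+t*r))) t :=
        (((hlog1.sub hlog2).sub (hasDerivAt_const t (Real.log r))).add
          (HasDerivAt.const_mul (2:ℝ) hlog3))
      have hF' : HasDerivAt F
          ((deriv h ((t:ℂ)*z) * z / h ((t:ℂ)*z)).re - t⁻¹ - 0 + 2 * (r/(1+t*r))) t :=
        hcomb.congr_of_eventuallyEq hFeq.symm
      have hval : deriv h ((t:ℂ)*z) * z / h ((t:ℂ)*z) = p ((t:ℂ)*z) / ((t:ℝ):ℂ) := by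
        rw [hpdef]; simp only
        rw [dhz _ htzne]
        field_simp
      have hre : (deriv h ((t:ℂ)*z) * z / h ((t:ℂ)*z)).re = (p ((t:ℂ)*z)).re / t := by
        rw [hval, div_ofReal_re _ ht0.ne']
      rw [hre] at hF'
      convert hF' using 1
      rw [one_div]
      ring
    have hF'nonneg : ∀ t ∈ Ioo (0:ℝ) 1,
        0 ≤ (p ((t:ℂ)*z)).re / t - 1/t + 2 * (r / (1 + t*r)) := by
      intro t ht
      obtain ⟨ht0, ht1⟩ := ht
      have htz : (t:ℂ)*z ∈ ball (0:ℂ) 1 := hmem t ht0.le ht1.le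
      have habs : ‖(t:ℂ)*z‖ = t * r := by
        rw [norm_mul, Complex.norm_real, Real.norm_eq_abs, abs_of_nonneg ht0.le, hrdef]
      have h4 := key4 _ htz
      rw [habs] at h4
      have hden : (0:ℝ) < 1 + t*r := by nlinarith
      have hzero : (1 - t*r)/(1+t*r) / t - 1/t + 2*(r/(1+t*r)) = 0 := by
        field_simp
        ring
      have hmono2 : (1 - t*r)/(1+t*r) / t ≤ (p ((t:ℂ)*z)).re / t :=
        (div_le_div_iff_of_pos_right ht0).mpr h4
      linarith
    have hdiff : DifferentiableOn ℝ F (interior (Icc (0:ℝ) 1)) := by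
      rw [interior_Icc]
      intro t ht
      exact ((hFd t ht).differentiableAt).differentiableWithinAt
    have hderiv0 : ∀ t ∈ interior (Icc (0:ℝ) 1), 0 ≤ deriv F t := by
      rw [interior_Icc]
      intro t ht
      rw [(hFd t ht).deriv]
      exact hF'nonneg t ht
    have hmono := monotoneOn_of_deriv_nonneg (convex_Icc (0:ℝ) 1) hFc hdiff hderiv0
    have hend := hmono (left_mem_Icc.2 zero_le_one) (right_mem_Icc.2 zero_le_one) zero_le_one
    have hF0 : F 0 = 0 := by
      rw [hFdef]; simp only
      rw [Complex.ofReal_zero, zero_mul, dh0, zero_mul, add_zero]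
      simp
    have hF1 : F 1 = Real.log (‖h z‖ / r * (1 + r)^2) := by
      rw [hFdef]; simp only
      rw [Complex.ofReal_one, one_mul, dhz z hz0, norm_div, ← hrdef, one_mul]
      rw [Real.log_mul (div_ne_zero (norm_ne_zero_iff.2 (hzne z hz hz0)) hr0.ne')
        (by positivity), Real.log_pow]
      push_cast
      ring
    rw [hF0, hF1] at hend
    have hApos : 0 < ‖h z‖ := norm_pos_iff.2 (hzne z hz hz0)
    have harg : (0:ℝ) < ‖h z‖ / r * (1 + r)^2 := by positivity
    have hge1 : 1 ≤ ‖h z‖ / r * (1 + r)^2 := (Real.log_nonneg_iff harg).1 hend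
    rw [div_le_iff₀ (by positivity : (0:ℝ) < (1+r)^2)]
    have h8 := mul_le_mul_of_nonneg_left hge1 hr0.le
    have h9 : r * (‖h z‖/r*(1+r)^2) = ‖h z‖*(1+r)^2 := by
      field_simp
    rw [mul_one, h9] at h8
    linarith
  -- final assembly
  intro z hz
  rcases eq_or_ne z 0 with rfl | hz0
  · simp [h0, g0]
  set r := ‖z‖ with hrdef
  have hr0 : 0 < r := by
    rw [hrdef]; exact norm_pos_iff.2 hz0
  have hr1 : r < 1 := mem_ball_zero_iff.1 hz
  have hden1 : (0:ℝ) < 1 + α * r := by nlinarith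
  have hden2 : (0:ℝ) < (1 + r)^2 := by nlinarith
  have hA : r / (1 + r)^2 ≤ ‖h z‖ := key5 z hz hz0
  have hP : ‖φ z‖ ≤ (α + r) / (1 + α * r) := key2 z hz
  have hgφ : ‖g z‖ = ‖φ z‖ * ‖h z‖ := by
    rw [φval z hz0, norm_div, div_mul_cancel₀]
    exact norm_ne_zero_iff.2 (hzne z hz hz0)
  have htri : ‖h z‖ - ‖g z‖ ≤ ‖h z + (starRingEnd ℂ) (g z)‖ := by
    have h1' := norm_le_add_norm_add (h z) ((starRingEnd ℂ) (g z))
    rw [Complex.norm_conj] at h1'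
    linarith
  have hstep : (1 - α) * (1 - r) / (1 + α * r) ≤ 1 - ‖φ z‖ := by
    have : (1 - α) * (1 - r) / (1 + α * r) = 1 - (α + r) / (1 + α * r) := by
      field_simp
      ring
    rw [this]
    linarith
  have hAnn : (0:ℝ) ≤ ‖h z‖ := norm_nonneg _
  have hstep2 : (1 - α) * r * (1 - r) / ((1 + α * r) * (1 + r) ^ 2)
      = (r / (1 + r)^2) * ((1 - α) * (1 - r) / (1 + α * r)) := by
    field_simp
  calc (1 - α) * r * (1 - r) / ((1 + α * r) * (1 + r) ^ 2)
      = (r / (1 + r)^2) * ((1 - α) * (1 - r) / (1 + α * r)) := hstep2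
    _ ≤ ‖h z‖ * (1 - ‖φ z‖) := by
        apply mul_le_mul hA hstep
        · apply div_nonneg (by nlinarith) (by positivity)
        · exact hAnn
    _ = ‖h z‖ - ‖φ z‖ * ‖h z‖ := by ring
    _ = ‖h z‖ - ‖g z‖ := by rw [hgφ]
    _ ≤ ‖h z + (starRingEnd ℂ) (g z)‖ := htri
end
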